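/- Let A_N be the power series algebra \mathbb{C}[q,q^{-1}]\{\{t_1,\ldots,t_N\}\} modulo the ideal generated by t_i t_{i+1} - q t_{i+1} t_i (1 \leq i < N) and t_i t_j - t_j t_i for |i-j| \geq 2. Then the nested quantum continued fraction (1 - (1 - (1 - \cdots (1-t_N)^{-1} t_{N-1})^{-1} \cdots t_2)^{-1} t_1)^{-1} equals \sum_{\alpha_1,\ldots,\alpha_N \geq 0} F_q(\alpha_1,\ldots,\alpha_N) t_N^{\alpha_N} \cdots t_1^{\alpha_1}, where F_q(a_1,\ldots,a_N) = \prod_{i=1}^{N} \binom{a_i + a_{i+1} - 1}{a_{i+1}}_q (with a_{N+1} = 0). -/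

import Mathlib

open LaurentPolynomial

/-- The base ring `ℂ[q,q⁻¹]`. -/
abbrev Rq : Type := LaurentPolynomial ℂ

/-- The Gaussian (q-)binomial coefficient (q-Pascal recurrence). -/
def qChoose {R : Type*} [CommRing R] (q : R) : ℕ → ℕ → R
  | _, 0 => 1
  | 0, _ + 1 => 0
  | n + 1, k + 1 => qChoose q n k + q ^ (k + 1) * qChoose q n (k + 1)

/-- Extension of a tuple `a : Fin N → ℕ` by zero (`a_{N+1} = 0`). -/
def aext {N : ℕ} (a : Fin N → ℕ) (i : ℕ) : ℕ := if h : i < N then a ⟨i, h⟩ else 0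

/-- `F_q(a_1,…,a_N) = ∏_{i=1}^N C_q(a_i + a_{i+1} - 1, a_{i+1})` with `a_{N+1} = 0`. -/
def Fq {R : Type*} [CommRing R] (q : R) {N : ℕ} (a : Fin N → ℕ) : R :=
  ∏ i ∈ Finset.range N, qChoose q (aext a i + aext a (i + 1) - 1) (aext a (i + 1))

/-- The nested quantum continued fraction
`nest [t₁, …, t_N] = (1 - (1 - ⋯ (1 - t_N)⁻¹ t_{N-1} ⋯)⁻¹ t₁)⁻¹`. -/
noncomputable def nest {A : Type*} [Ring A] : List A → A
  | [] => 1
  | t :: rest => Ring.inverse (1 - nest rest * t)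


section qc
variable {R : Type*} [CommRing R] (q : R)

@[simp] lemma qChoose_zero_right (n : ℕ) : qChoose q n 0 = 1 := by
  cases n <;> rfl

lemma qChoose_eq_zero : ∀ {n k : ℕ}, n < k → qChoose q n k = 0 := by
  intro n
  induction n with
  | zero => intro k hk; match k, hk with
    | k + 1, _ => rfl
  | succ n ih =>
    intro k hk
    match k, hk with
    | k + 1, hk =>
      show qChoose q n k + q ^ (k + 1) * qChoose q n (k + 1) = 0
      rw [ih (by omega), ih (by omega), mul_zero, add_zero]

@[simp] lemma qChoose_self : ∀ n : ℕ, qChoose q n n = 1 := by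
  intro n
  induction n with
  | zero => rfl
  | succ n ih =>
    show qChoose q n n + q ^ (n + 1) * qChoose q n (n + 1) = 1
    rw [ih, qChoose_eq_zero q (by omega), mul_zero, add_zero]

lemma qChoose_one_right (n : ℕ) : qChoose q n 1 = ∑ i ∈ Finset.range n, q ^ i := by
  induction n with
  | zero => rfl
  | succ n ih =>
    show qChoose q n 0 + q ^ 1 * qChoose q n 1 = _
    rw [qChoose_zero_right, ih, geom_sum_succ]
    ring

lemma qChoose_pascal2 : ∀ n k : ℕ, qChoose q (n + 1) (k + 1) =
    q ^ (n - k) * qChoose q n k + qChoose q n (k + 1) := by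
  intro n
  induction n with
  | zero =>
    intro k
    match k with
    | 0 => simp [show qChoose q 1 1 = 1 from qChoose_self q 1,
        show qChoose q 0 1 = 0 from rfl]
    | k + 1 =>
      rw [qChoose_eq_zero q (by omega), qChoose_eq_zero q (by omega),
        qChoose_eq_zero q (by omega)]
      ring
  | succ n ih =>
    intro k
    match k with
    | 0 =>
      have hA := geom_sum_succ (x := q) (n := n + 1)
      have hB := geom_sum_succ' (x := q) (n := n + 1)
      show qChoose q (n+1) 0 + q ^ 1 * qChoose q (n+1) 1
          = q ^ (n + 1) * qChoose q (n+1) 0 + qChoose q (n+1) 1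
      rw [qChoose_zero_right, qChoose_one_right]
      linear_combination hB - hA
    | k + 1 =>
      calc qChoose q (n+1+1) (k+1+1)
          = qChoose q (n+1) (k+1) + q^(k+2) * qChoose q (n+1) (k+2) := rfl
        _ = (q^(n-k) * qChoose q n k + qChoose q n (k+1))
              + q^(k+2) * (q^(n-(k+1)) * qChoose q n (k+1) + qChoose q n (k+2)) := by
            rw [ih k, ih (k+1)]
        _ = q^(n-k) * (qChoose q n k + q^(k+1) * qChoose q n (k+1))
              + (qChoose q n (k+1) + q^(k+2) * qChoose q n (k+2)) := by
            rcases lt_or_ge k n with h | h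
            · have hq : q^(k+2) * q^(n-(k+1)) = q^(n-k) * q^(k+1) := by
                rw [← pow_add, ← pow_add]; congr 1; omega
              linear_combination hq * qChoose q n (k+1)
            · rw [qChoose_eq_zero q (show n < k+1 by omega),
                qChoose_eq_zero q (show n < k+2 by omega)]
              ring
        _ = q^(n+1-(k+1)) * qChoose q (n+1) (k+1) + qChoose q (n+1) (k+2) := by
            rw [show (n+1-(k+1) : ℕ) = n - k from by omega]; rfl

end qc

section comb
variable {R : Type*} [CommRing R] (q : R) {N : ℕ}

lemma aext_cons_zero (m : ℕ) (b : Fin N → ℕ) : aext (Fin.cons m b : Fin (N+1) → ℕ) 0 = m := by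
  simp [aext]

lemma aext_cons_succ (m : ℕ) (b : Fin N → ℕ) (i : ℕ) :
    aext (Fin.cons m b : Fin (N+1) → ℕ) (i + 1) = aext b i := by
  unfold aext
  by_cases h : i < N
  · rw [dif_pos (by omega : i + 1 < N + 1), dif_pos h]
    exact Fin.cons_succ (α := fun _ : Fin (N+1) => ℕ) m b ⟨i, h⟩
  · rw [dif_neg (by omega), dif_neg h]

lemma Fq_cons (m : ℕ) (b : Fin N → ℕ) :
    Fq q (Fin.cons m b : Fin (N+1) → ℕ)
      = qChoose q (m + aext b 0 - 1) (aext b 0) * Fq q b := by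
  unfold Fq
  rw [Finset.prod_range_succ']
  rw [mul_comm]
  congr 1
  · rw [aext_cons_zero, aext_cons_succ]
  · apply Finset.prod_congr rfl
    intro i _
    rw [aext_cons_succ, aext_cons_succ]

/-- boundary-extended coefficient -/
def Gq (q : R) (k : ℕ) {N : ℕ} (a : Fin N → ℕ) : R :=
  qChoose q (k + aext a 0 - 1) (aext a 0) * Fq q a

lemma Gq_cons (k m : ℕ) (b : Fin N → ℕ) :
    Gq q k (Fin.cons m b : Fin (N+1) → ℕ) = qChoose q (k + m - 1) m * Gq q m b := by
  unfold Gq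
  rw [Fq_cons, aext_cons_zero]

lemma aext_zero_tuple (i : ℕ) : aext (0 : Fin N → ℕ) i = 0 := by
  unfold aext; split <;> simp

lemma Fq_zero_tuple : Fq q (0 : Fin N → ℕ) = 1 := by
  unfold Fq
  apply Finset.prod_eq_one
  intro i _
  rw [aext_zero_tuple, aext_zero_tuple]
  simp

lemma Gq_zero_tuple (k : ℕ) : Gq q k (0 : Fin N → ℕ) = 1 := by
  unfold Gq
  rw [aext_zero_tuple, Fq_zero_tuple]
  simp

lemma Gq_zero_of_ne : ∀ {N : ℕ} (a : Fin N → ℕ), a ≠ 0 → Gq q 0 a = 0 := by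
  intro N
  induction N with
  | zero =>
    intro a ha
    exact absurd (funext fun i => i.elim0) ha
  | succ N ih =>
    intro a ha
    rw [← Fin.cons_self_tail a, Gq_cons]
    rcases Nat.eq_zero_or_pos (a 0) with h0 | h0
    · have htail : Fin.tail a ≠ 0 := by
        intro h
        apply ha
        funext i
        refine Fin.cases h0 (fun j => ?_) i
        show Fin.tail a j = 0
        rw [h]
        rfl
      rw [h0, ih _ htail, mul_zero]
    · rw [qChoose_eq_zero q (show 0 + a 0 - 1 < a 0 by omega), zero_mul]

/-- reindexing sums over `antidiagonalTuple (N+1) n` -/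
lemma sum_adT_succ {M : Type*} [AddCommMonoid M] (n : ℕ) (F : (Fin (N+1) → ℕ) → M) :
    ∑ a ∈ Finset.Nat.antidiagonalTuple (N+1) n, F a
      = ∑ m ∈ Finset.range (n+1), ∑ b ∈ Finset.Nat.antidiagonalTuple N (n - m),
          F (Fin.cons m b) := by
  rw [Finset.sum_sigma']
  apply Finset.sum_nbij' (i := fun a => ⟨a 0, Fin.tail a⟩)
    (j := fun p => Fin.cons p.1 p.2)
  · intro a ha
    rw [Finset.Nat.mem_antidiagonalTuple] at ha
    rw [Fin.sum_univ_succ] at ha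
    simp only [Finset.mem_sigma, Finset.mem_range, Finset.Nat.mem_antidiagonalTuple]
    refine ⟨by omega, ?_⟩
    show ∑ i, Fin.tail a i = n - a 0
    have : ∑ i, Fin.tail a i = ∑ i : Fin N, a i.succ := rfl
    omega
  · intro p hp
    rw [Finset.mem_sigma, Finset.mem_range, Finset.Nat.mem_antidiagonalTuple] at hp
    rw [Finset.Nat.mem_antidiagonalTuple, Fin.sum_univ_succ]
    simp only [Fin.cons_zero, Fin.cons_succ]
    have : ∑ i : Fin N, p.snd i = n - p.fst := hp.2
    omega
  · intro a _; exact Fin.cons_self_tail a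
  · intro p _
    refine Sigma.ext ?_ ?_
    · simp
    · simp [Fin.tail_cons]
  · intro a _
    rw [Fin.cons_self_tail]

/-- triangle swap -/
lemma tri_swap {M : Type*} [AddCommMonoid M] (n : ℕ) (f : ℕ → ℕ → M) :
    ∑ i ∈ Finset.range (n+1), ∑ m ∈ Finset.range (i+1), f i m
      = ∑ m ∈ Finset.range (n+1), ∑ i ∈ Finset.range (n+1-m), f (m+i) m := by
  calc ∑ i ∈ Finset.range (n+1), ∑ m ∈ Finset.range (i+1), f i m
      = ∑ i ∈ Finset.range (n+1), ∑ m ∈ Finset.range (n+1), (if m ≤ i then f i m else 0) := by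
        apply Finset.sum_congr rfl
        intro i hi
        rw [Finset.mem_range] at hi
        calc ∑ m ∈ Finset.range (i+1), f i m
            = ∑ m ∈ Finset.range (i+1), (if m ≤ i then f i m else 0) := by
              apply Finset.sum_congr rfl
              intro m hm
              rw [Finset.mem_range] at hm
              rw [if_pos (by omega)]
          _ = ∑ m ∈ Finset.range (n+1), (if m ≤ i then f i m else 0) := by
              apply Finset.sum_subset (Finset.range_subset_range.2 (by omega))
              intro m _ hm
              rw [Finset.mem_range] at hm
              rw [if_neg (by omega)]
    _ = ∑ m ∈ Finset.range (n+1), ∑ i ∈ Finset.range (n+1), (if m ≤ i then f i m else 0) :=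
        Finset.sum_comm
    _ = ∑ m ∈ Finset.range (n+1), ∑ i ∈ Finset.range (n+1-m), f (m+i) m := by
        apply Finset.sum_congr rfl
        intro m hm
        rw [Finset.mem_range] at hm
        calc ∑ i ∈ Finset.range (n+1), (if m ≤ i then f i m else 0)
            = ∑ i ∈ Finset.Ico m (n+1), (if m ≤ i then f i m else 0) := by
              symm
              apply Finset.sum_subset
              · intro x hx
                rw [Finset.mem_Ico] at hx
                exact Finset.mem_range.2 hx.2
              · intro x hx hnx
                rw [Finset.mem_range] at hx
                rw [Finset.mem_Ico] at hnx
                rw [if_neg (by omega)]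
          _ = ∑ i ∈ Finset.Ico m (n+1), f i m := by
              apply Finset.sum_congr rfl
              intro i hi
              rw [Finset.mem_Ico] at hi
              rw [if_pos hi.1]
          _ = ∑ i ∈ Finset.range (n+1-m), f (m+i) m := Finset.sum_Ico_eq_sum_range (fun i => f i m) m (n+1)

end comb

section ringlem
variable {B : Type*} [Ring B]

lemma nest_cons (a : B) (l : List B) : nest (a :: l) = Ring.inverse (1 - nest l * a) := rfl

lemma commute_ring_inverse {x y : B} (h : Commute x y) : Commute x (Ring.inverse y) := by
  by_cases hy : IsUnit y
  · obtain ⟨u, rfl⟩ := hy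
    rw [Ring.inverse_unit]
    exact h.units_inv_right
  · rw [Ring.inverse_non_unit _ hy]
    exact Commute.zero_right x

lemma commute_nest {x : B} {l : List B} (h : ∀ y ∈ l, Commute x y) :
    Commute x (nest l) := by
  induction l with
  | nil => exact Commute.one_right x
  | cons a l ih =>
    rw [nest_cons]
    apply commute_ring_inverse
    exact (Commute.one_right x).sub_right
      ((ih (fun y hy => h y (List.mem_cons_of_mem a hy))).mul_right (h a List.mem_cons_self))

lemma mul_ring_inverse_eq {g y z : B} (hy : IsUnit y) (hz : IsUnit z)
    (h : g * y = z * g) : g * Ring.inverse y = Ring.inverse z * g := by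
  have h1 : Ring.inverse z * z = 1 := Ring.inverse_mul_cancel z hz
  have h2 : y * Ring.inverse y = 1 := Ring.mul_inverse_cancel y hy
  calc g * Ring.inverse y = Ring.inverse z * z * (g * Ring.inverse y) := by rw [h1, one_mul]
    _ = Ring.inverse z * ((z * g) * Ring.inverse y) := by noncomm_ring
    _ = Ring.inverse z * ((g * y) * Ring.inverse y) := by rw [h]
    _ = Ring.inverse z * g * (y * Ring.inverse y) := by noncomm_ring
    _ = Ring.inverse z * g := by rw [h2, mul_one]

lemma nest_twist {g a b : B} {l : List B}
    (hcomm : ∀ y ∈ l, Commute g y) (hab : g * a = b * g)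
    (hua : IsUnit (1 - nest l * a)) (hub : IsUnit (1 - nest l * b)) :
    g * nest (a :: l) = nest (b :: l) * g := by
  rw [nest_cons, nest_cons]
  apply mul_ring_inverse_eq hua hub
  have hc : Commute g (nest l) := commute_nest hcomm
  calc g * (1 - nest l * a) = g - g * nest l * a := by noncomm_ring
    _ = g - nest l * (g * a) := by rw [hc.eq]; noncomm_ring
    _ = g - nest l * b * g := by rw [hab]; noncomm_ring
    _ = (1 - nest l * b) * g := by noncomm_ring

end ringlem

section pslem
open PowerSeries
variable {A : Type*} [Ring A]

lemma isUnit_one_sub {x : PowerSeries A} (hx : constantCoeff x = 0) :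
    IsUnit ((1 : PowerSeries A) - x) := by
  rw [PowerSeries.isUnit_iff_constantCoeff, map_sub, map_one, hx, sub_zero]
  exact isUnit_one

noncomputable def entryS (c : A) : PowerSeries A := PowerSeries.C c * PowerSeries.X

lemma constantCoeff_entryS (c : A) : constantCoeff (entryS c) = 0 := by
  rw [entryS, map_mul, constantCoeff_X, mul_zero]

lemma isUnit_one_sub_mul_entryS (f : PowerSeries A) (c : A) :
    IsUnit ((1 : PowerSeries A) - f * entryS c) := by
  apply isUnit_one_sub
  rw [map_mul, constantCoeff_entryS, mul_zero]

lemma entryS_mul_entryS (c d : A) : entryS c * entryS d = PowerSeries.C (c * d) * (X * X) := by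
  rw [entryS, entryS, map_mul]
  calc PowerSeries.C c * X * (PowerSeries.C d * X) = PowerSeries.C c * (X * PowerSeries.C d) * X := by noncomm_ring
    _ = PowerSeries.C c * (PowerSeries.C d * X) * X := by rw [(commute_X (PowerSeries.C d)).eq]
    _ = PowerSeries.C c * PowerSeries.C d * (X * X) := by noncomm_ring

lemma entryS_commute {c d : A} (h : c * d = d * c) :
    Commute (entryS c) (entryS d) := by
  unfold Commute SemiconjBy
  rw [entryS_mul_entryS, entryS_mul_entryS, h]

/-- coefficient-level twist -/
lemma coeff_twist {g : A} {F G : PowerSeries A}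
    (h : entryS g * F = G * entryS g) (j : ℕ) :
    g * coeff j F = coeff j G * g := by
  have := congrArg (coeff (j + 1)) h
  rw [entryS, mul_assoc, coeff_C_mul, coeff_succ_X_mul] at this
  rw [this, ← mul_assoc, coeff_succ_mul_X, coeff_mul_C]

end pslem

set_option linter.unusedSectionVars false
section mainsec
open PowerSeries

variable {A : Type*} [Ring A] [Algebra Rq A]

/-- scale the first variable by `q^r` -/
noncomputable def sc {N : ℕ} (t : Fin N → A) (r : ℕ) : Fin N → A :=
  fun i => if (i : ℕ) = 0 then (algebraMap Rq A (T 1)) ^ r * t i else t i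

noncomputable def nestS {N : ℕ} (t : Fin N → A) : PowerSeries A :=
  nest (List.ofFn fun i => entryS (t i))

noncomputable def pk {N : ℕ} (t : Fin N → A) (k : ℕ) : PowerSeries A :=
  ((List.range k).map fun j => nestS (sc t j)).prod

noncomputable def Mon {N : ℕ} (t : Fin N → A) (a : Fin N → ℕ) : A :=
  (List.ofFn fun i => t i.rev ^ a i.rev).prod

noncomputable def Rser {N : ℕ} (t : Fin N → A) (k : ℕ) : PowerSeries A :=
  PowerSeries.mk fun n => ∑ a ∈ Finset.Nat.antidiagonalTuple N n,
    algebraMap Rq A (Gq (T 1) k a) * Mon t a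

def Hadj {N : ℕ} (t : Fin N → A) : Prop :=
  ∀ (i : ℕ) (hi : i < N) (hi1 : i + 1 < N),
    t ⟨i, hi⟩ * t ⟨i + 1, hi1⟩ = algebraMap Rq A (T 1) * (t ⟨i + 1, hi1⟩ * t ⟨i, hi⟩)

def Hfar {N : ℕ} (t : Fin N → A) : Prop :=
  ∀ i j : Fin N, 2 ≤ |((i : ℕ) : ℤ) - ((j : ℕ) : ℤ)| → t i * t j = t j * t i

lemma Mon_cons {N : ℕ} (t : Fin (N+1) → A) (m : ℕ) (b : Fin N → ℕ) :
    Mon t (Fin.cons m b) = Mon (fun i => t i.succ) b * t 0 ^ m := by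
  unfold Mon
  rw [List.ofFn_succ', List.prod_concat]
  congr 1
  · apply congrArg List.prod
    apply congrArg List.ofFn
    funext i
    rw [Fin.rev_castSucc]
    simp [Fin.cons_succ]
  · rw [Fin.rev_last, Fin.cons_zero]

lemma Mon_zero_tuple {N : ℕ} (t : Fin N → A) : Mon t 0 = 1 := by
  unfold Mon
  apply List.prod_eq_one
  intro x hx
  rw [List.mem_ofFn] at hx
  obtain ⟨i, rfl⟩ := hx
  exact pow_zero _

lemma nestS_cons {N : ℕ} (v : Fin (N+1) → A) (r : ℕ) :
    nestS (sc v r) = nest (entryS ((algebraMap Rq A (T 1)) ^ r * v 0)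
      :: (List.ofFn fun i : Fin N => entryS (v i.succ))) := by
  unfold nestS
  apply congrArg nest
  rw [List.ofFn_succ]
  congr 1

lemma nestS_succ_eq {N : ℕ} (v : Fin (N+1) → A) (r : ℕ) :
    nestS (sc v r) = Ring.inverse
      (1 - nestS (fun i : Fin N => v i.succ) * entryS ((algebraMap Rq A (T 1)) ^ r * v 0)) := by
  rw [nestS_cons]; rfl

lemma nestS_twist {N : ℕ} (v : Fin (N+1) → A) (g : A)
    (h0 : g * v 0 = algebraMap Rq A (T 1) * (v 0 * g))
    (hrest : ∀ i : Fin (N+1), (i : ℕ) ≠ 0 → g * v i = v i * g) (r : ℕ) :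
    entryS g * nestS (sc v r) = nestS (sc v (r+1)) * entryS g := by
  have hpow : ∀ s : ℕ, (algebraMap Rq A (T 1)) ^ s = algebraMap Rq A ((T 1 : Rq) ^ s) :=
    fun s => (map_pow _ _ _).symm
  rw [nestS_cons, nestS_cons]
  refine nest_twist ?_ ?_ ?_ ?_
  · intro y hy
    rw [List.mem_ofFn] at hy
    obtain ⟨i, rfl⟩ := hy
    exact entryS_commute (hrest i.succ (by simp [Fin.val_succ]))
  · rw [entryS_mul_entryS, entryS_mul_entryS]
    congr 1
    apply congrArg (PowerSeries.C)
    exact calc g * ((algebraMap Rq A (T 1)) ^ r * v 0)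
        = g * (algebraMap Rq A (T 1)) ^ r * v 0 := by rw [mul_assoc]
      _ = (algebraMap Rq A (T 1)) ^ r * g * v 0 := by
          rw [hpow, ← Algebra.commutes ((T 1 : Rq) ^ r) g]
      _ = (algebraMap Rq A (T 1)) ^ r * (g * v 0) := by rw [mul_assoc]
      _ = (algebraMap Rq A (T 1)) ^ r * (algebraMap Rq A (T 1) * (v 0 * g)) := by rw [h0]
      _ = (algebraMap Rq A (T 1)) ^ (r+1) * v 0 * g := by rw [pow_succ]; noncomm_ring
  · exact isUnit_one_sub_mul_entryS _ _
  · exact isUnit_one_sub_mul_entryS _ _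

end mainsec

section mainthm
open PowerSeries

variable {A : Type*} [Ring A] [Algebra Rq A]

lemma central_pull (z : Rq) (x y : A) :
    x * (algebraMap Rq A z * y) = algebraMap Rq A z * (x * y) := by
  rw [← mul_assoc, ← Algebra.commutes z x, mul_assoc]

lemma nestS_twist' {N : ℕ} (v : Fin N → A) (g : A)
    (h0 : ∀ h : 0 < N, g * v ⟨0, h⟩ = algebraMap Rq A (T 1) * (v ⟨0, h⟩ * g))
    (hrest : ∀ i : Fin N, (i : ℕ) ≠ 0 → g * v i = v i * g) (r : ℕ) :
    entryS g * nestS (sc v r) = nestS (sc v (r+1)) * entryS g := by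
  cases N with
  | zero =>
    have he : ∀ s : ℕ, nestS (sc v s) = 1 := by
      intro s
      unfold nestS
      rw [List.ofFn_zero]
      rfl
    rw [he, he, one_mul, mul_one]
  | succ N' =>
    refine nestS_twist v g ?_ hrest r
    have := h0 (Nat.succ_pos N')
    convert this using 2 <;> rfl

theorem main_lemma : ∀ {N : ℕ} (t : Fin N → A), Hadj t → Hfar t → ∀ k : ℕ,
    pk t k = Rser t k := by
  intro N
  induction N with
  | zero =>
    intro t _ _ k
    have h1 : pk t k = 1 := by
      unfold pk
      apply List.prod_eq_one
      intro x hx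
      rw [List.mem_map] at hx
      obtain ⟨j, _, rfl⟩ := hx
      show nestS (sc t j) = 1
      unfold nestS
      rw [List.ofFn_zero]
      rfl
    rw [h1]
    symm
    ext n
    unfold Rser
    rw [coeff_mk, PowerSeries.coeff_one]
    cases n with
    | zero =>
      rw [if_pos rfl, Finset.Nat.antidiagonalTuple_zero_zero, Finset.sum_singleton]
      have hG : Gq (T 1 : Rq) k (![] : Fin 0 → ℕ) = 1 := by
        unfold Gq Fq
        rw [Finset.prod_range_zero]
        have : aext (![] : Fin 0 → ℕ) 0 = 0 := by unfold aext; simp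
        rw [this, qChoose_zero_right, mul_one]
      rw [hG, map_one, one_mul]
      unfold Mon
      rw [List.ofFn_zero, List.prod_nil]
    | succ n =>
      rw [if_neg (Nat.succ_ne_zero n), Finset.Nat.antidiagonalTuple_zero_succ,
        Finset.sum_empty]
  | succ N ih =>
    intro t hadj hfar
    set u : Fin N → A := fun i => t i.succ with hu
    have hadj_u : Hadj u := by
      intro i hi hi1
      exact hadj (i+1) (Nat.succ_lt_succ hi) (Nat.succ_lt_succ hi1)
    have hfar_u : Hfar u := by
      intro i j h
      refine hfar i.succ j.succ ?_
      rw [Fin.val_succ, Fin.val_succ]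
      push_cast
      rw [add_sub_add_right_eq_sub]
      exact h
    have tailIH : ∀ m, pk u m = Rser u m := fun m => ih u hadj_u hfar_u m
    have hcent : ∀ (z : Rq) (x : A), algebraMap Rq A z * x = x * algebraMap Rq A z :=
      fun z x => Algebra.commutes z x
    have hrest0 : ∀ i : Fin N, (i : ℕ) ≠ 0 → t 0 * u i = u i * t 0 := by
      intro i hi
      refine hfar 0 i.succ ?_
      have hi' : 1 ≤ (i : ℕ) := Nat.one_le_iff_ne_zero.2 hi
      rw [Fin.val_succ]
      show (2:ℤ) ≤ |((0 : Fin (N+1)) : ℤ) - _|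
      rw [Fin.val_zero]
      push_cast
      rw [zero_sub, abs_neg, abs_of_nonneg (by positivity)]
      push_cast
      omega
    have twist : ∀ r, entryS (t 0) * nestS (sc u r) = nestS (sc u (r+1)) * entryS (t 0) := by
      intro r
      refine nestS_twist' u (t 0) ?_ hrest0 r
      intro h
      exact hadj 0 (Nat.succ_pos N) (Nat.succ_lt_succ h)
    have ct : ∀ r j, t 0 * coeff j (nestS (sc u r))
        = coeff j (nestS (sc u (r+1))) * t 0 :=
      fun r j => coeff_twist (twist r) j
    have ctm : ∀ (m r j : ℕ), (t 0)^m * coeff j (nestS (sc u r))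
        = coeff j (nestS (sc u (r+m))) * (t 0)^m := by
      intro m
      induction m with
      | zero => intro r j; simp
      | succ m ihm =>
        intro r j
        calc (t 0)^(m+1) * coeff j (nestS (sc u r))
            = (t 0)^m * (t 0 * coeff j (nestS (sc u r))) := by
              rw [pow_succ]; noncomm_ring
          _ = (t 0)^m * (coeff j (nestS (sc u (r+1))) * t 0) := by rw [ct r j]
          _ = ((t 0)^m * coeff j (nestS (sc u (r+1)))) * t 0 := by noncomm_ring
          _ = (coeff j (nestS (sc u (r+1+m))) * (t 0)^m) * t 0 := by rw [ihm (r+1) j]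
          _ = coeff j (nestS (sc u (r+(m+1)))) * (t 0)^(m+1) := by
              rw [show r+1+m = r+(m+1) from by omega, pow_succ]; noncomm_ring
    have qstep : ∀ m, pk u m * nestS (sc u m) = pk u (m+1) := by
      intro m
      unfold pk
      rw [List.range_succ, List.map_append, List.prod_append]
      simp
    have L5 : ∀ (κ n : ℕ),
        (∑ a ∈ Finset.Nat.antidiagonalTuple (N+1) n,
            algebraMap Rq A (Gq (T 1) κ a) * Mon t a)
        = ∑ m ∈ Finset.range (n+1),
            algebraMap Rq A (qChoose (T 1) (κ + m - 1) m)
              * (coeff (n-m) (pk u m) * (t 0)^m) := by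
      intro κ n
      rw [sum_adT_succ]
      apply Finset.sum_congr rfl
      intro m _
      calc ∑ b ∈ Finset.Nat.antidiagonalTuple N (n-m),
            algebraMap Rq A (Gq (T 1) κ (Fin.cons m b)) * Mon t (Fin.cons m b)
          = ∑ b ∈ Finset.Nat.antidiagonalTuple N (n-m),
            algebraMap Rq A (qChoose (T 1) (κ + m - 1) m)
              * ((algebraMap Rq A (Gq (T 1) m b) * Mon u b) * (t 0)^m) := by
            apply Finset.sum_congr rfl
            intro b _
            rw [Gq_cons, map_mul, Mon_cons, ← hu]
            noncomm_ring
        _ = algebraMap Rq A (qChoose (T 1) (κ + m - 1) m)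
              * ((∑ b ∈ Finset.Nat.antidiagonalTuple N (n-m),
                  algebraMap Rq A (Gq (T 1) m b) * Mon u b) * (t 0)^m) := by
            rw [Finset.sum_mul, Finset.mul_sum]
        _ = algebraMap Rq A (qChoose (T 1) (κ + m - 1) m)
              * (coeff (n-m) (pk u m) * (t 0)^m) := by
            rw [tailIH m]
            unfold Rser
            rw [coeff_mk]
    intro k
    induction k with
    | zero =>
      have h1 : pk t 0 = 1 := by unfold pk; simp
      rw [h1]
      symm
      ext n
      unfold Rser
      rw [coeff_mk, PowerSeries.coeff_one]
      cases n with
      | zero =>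
        rw [if_pos rfl, Finset.Nat.antidiagonalTuple_zero_right, Finset.sum_singleton,
          Gq_zero_tuple, map_one, one_mul, Mon_zero_tuple]
      | succ n =>
        rw [if_neg (Nat.succ_ne_zero n)]
        apply Finset.sum_eq_zero
        intro a ha
        rw [Finset.Nat.mem_antidiagonalTuple] at ha
        have hane : a ≠ 0 := by
          intro h
          rw [h] at ha
          simp at ha
        rw [Gq_zero_of_ne (T 1) a hane, map_zero, zero_mul]
    | succ k ihk =>
      have c0 : pk t (k+1) = pk t k * nestS (sc t k) := by
        unfold pk
        rw [List.range_succ, List.map_append, List.prod_append]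
        simp
      have su0 : nestS (sc u 0) = nestS u :=
        congrArg nestS (funext fun i => by simp [sc])
      have hdec : nestS (sc t k) = Ring.inverse
          (1 - nestS (sc u 0) * entryS ((algebraMap Rq A (T 1))^k * t 0)) := by
        rw [nestS_succ_eq t k, su0, ← hu]
      set Y : PowerSeries A := nestS (sc u 0) * entryS ((algebraMap Rq A (T 1))^k * t 0)
        with hY
      have hKI : Rser t (k+1) * (1 - Y) = Rser t k := by
        ext n
        rw [mul_one_sub, map_sub]
        have hY' : Rser t (k+1) * Y
            = ((Rser t (k+1) * nestS (sc u 0))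
                * PowerSeries.C ((algebraMap Rq A (T 1))^k * t 0)) * PowerSeries.X := by
          rw [hY, entryS]
          noncomm_ring
        cases n with
        | zero =>
          rw [hY', PowerSeries.coeff_zero_mul_X, sub_zero]
          unfold Rser
          rw [coeff_mk, coeff_mk, Finset.Nat.antidiagonalTuple_zero_right,
            Finset.sum_singleton, Finset.sum_singleton, Gq_zero_tuple, Gq_zero_tuple]
        | succ n' =>
          have step1 : ∀ i, coeff i (Rser t (k+1))
              = ∑ m ∈ Finset.range (i+1),
                  algebraMap Rq A (qChoose (T 1) (k+m) m)
                    * (coeff (i-m) (pk u m) * (t 0)^m) := by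
            intro i
            unfold Rser
            rw [coeff_mk, L5 (k+1) i]
            apply Finset.sum_congr rfl
            intro m _
            rw [show k+1+m-1 = k+m from by omega]
          have mid0 : coeff (n'+1) (Rser t (k+1) * Y)
              = (∑ i ∈ Finset.range (n'+1),
                  coeff i (Rser t (k+1)) * coeff (n'-i) (nestS (sc u 0)))
                * ((algebraMap Rq A (T 1))^k * t 0) := by
            rw [hY', PowerSeries.coeff_succ_mul_X, PowerSeries.coeff_mul_C,
              PowerSeries.coeff_mul, Finset.Nat.sum_antidiagonal_eq_sum_range_succ_mk]
          have mid1 : coeff (n'+1) (Rser t (k+1) * Y)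
              = ∑ i ∈ Finset.range (n'+1), ∑ m ∈ Finset.range (i+1),
                  algebraMap Rq A ((T 1 : Rq)^k * qChoose (T 1) (k+m) m)
                    * ((coeff (i-m) (pk u m) * coeff (n'-i) (nestS (sc u m)))
                        * (t 0)^(m+1)) := by
            rw [mid0, Finset.sum_mul]
            apply Finset.sum_congr rfl
            intro i _
            rw [step1 i, Finset.sum_mul, Finset.sum_mul]
            apply Finset.sum_congr rfl
            intro m _
            rw [← map_pow]
            have e1 : (t 0)^m * coeff (n'-i) (nestS (sc u 0))
                = coeff (n'-i) (nestS (sc u m)) * (t 0)^m := by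
              have := ctm m 0 (n'-i)
              rwa [zero_add] at this
            calc ((algebraMap Rq A (qChoose (T 1) (k+m) m)
                    * (coeff (i-m) (pk u m) * (t 0)^m))
                  * coeff (n'-i) (nestS (sc u 0)))
                  * (algebraMap Rq A ((T 1 : Rq)^k) * t 0)
                = algebraMap Rq A (qChoose (T 1) (k+m) m)
                    * (coeff (i-m) (pk u m)
                      * ((t 0)^m * coeff (n'-i) (nestS (sc u 0))))
                    * (algebraMap Rq A ((T 1 : Rq)^k) * t 0) := by noncomm_ring
              _ = algebraMap Rq A (qChoose (T 1) (k+m) m)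
                    * (coeff (i-m) (pk u m)
                      * (coeff (n'-i) (nestS (sc u m)) * (t 0)^m))
                    * (algebraMap Rq A ((T 1 : Rq)^k) * t 0) := by rw [e1]
              _ = algebraMap Rq A (qChoose (T 1) (k+m) m)
                    * ((coeff (i-m) (pk u m) * coeff (n'-i) (nestS (sc u m)))
                      * ((t 0)^m * (algebraMap Rq A ((T 1 : Rq)^k) * t 0))) := by
                  noncomm_ring
              _ = algebraMap Rq A (qChoose (T 1) (k+m) m)
                    * ((coeff (i-m) (pk u m) * coeff (n'-i) (nestS (sc u m)))
                      * (algebraMap Rq A ((T 1 : Rq)^k) * ((t 0)^m * t 0))) := by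
                  rw [central_pull]
              _ = algebraMap Rq A ((T 1 : Rq)^k * qChoose (T 1) (k+m) m)
                    * ((coeff (i-m) (pk u m) * coeff (n'-i) (nestS (sc u m)))
                      * (t 0)^(m+1)) := by
                  rw [central_pull, central_pull, map_mul, pow_succ]
                  noncomm_ring
          have mid2 : coeff (n'+1) (Rser t (k+1) * Y)
              = ∑ m ∈ Finset.range (n'+1),
                  algebraMap Rq A ((T 1 : Rq)^k * qChoose (T 1) (k+m) m)
                    * (coeff (n'-m) (pk u (m+1)) * (t 0)^(m+1)) := by
            rw [mid1, tri_swap]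
            apply Finset.sum_congr rfl
            intro m hm
            rw [Finset.mem_range] at hm
            have hle : m ≤ n' := by omega
            calc ∑ i' ∈ Finset.range (n'+1-m),
                  algebraMap Rq A ((T 1 : Rq)^k * qChoose (T 1) (k+m) m)
                    * ((coeff (m+i'-m) (pk u m) * coeff (n'-(m+i')) (nestS (sc u m)))
                        * (t 0)^(m+1))
                = ∑ i' ∈ Finset.range ((n'-m)+1),
                  algebraMap Rq A ((T 1 : Rq)^k * qChoose (T 1) (k+m) m)
                    * ((coeff i' (pk u m) * coeff ((n'-m)-i') (nestS (sc u m)))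
                        * (t 0)^(m+1)) := by
                  rw [show n'+1-m = (n'-m)+1 from by omega]
                  apply Finset.sum_congr rfl
                  intro i' _
                  rw [show m+i'-m = i' from by omega, show n'-(m+i') = (n'-m)-i' from by omega]
              _ = algebraMap Rq A ((T 1 : Rq)^k * qChoose (T 1) (k+m) m)
                    * ((∑ i' ∈ Finset.range ((n'-m)+1),
                        coeff i' (pk u m) * coeff ((n'-m)-i') (nestS (sc u m)))
                      * (t 0)^(m+1)) := by
                  rw [Finset.sum_mul, Finset.mul_sum]
              _ = algebraMap Rq A ((T 1 : Rq)^k * qChoose (T 1) (k+m) m)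
                    * (coeff (n'-m) (pk u (m+1)) * (t 0)^(m+1)) := by
                  rw [← Finset.Nat.sum_antidiagonal_eq_sum_range_succ_mk
                      (fun p => coeff p.1 (pk u m) * coeff p.2 (nestS (sc u m))),
                    ← PowerSeries.coeff_mul, qstep m]
          -- final assembly
          have lhs1 : coeff (n'+1) (Rser t (k+1))
              = ∑ m ∈ Finset.range (n'+1),
                  algebraMap Rq A (qChoose (T 1) (k+(m+1)) (m+1))
                    * (coeff (n'-m) (pk u (m+1)) * (t 0)^(m+1))
                + algebraMap Rq A (qChoose (T 1) (k+0) 0)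
                    * (coeff (n'+1) (pk u 0) * (t 0)^0) := by
            rw [step1 (n'+1), Finset.sum_range_succ']
            congr 1
            apply Finset.sum_congr rfl
            intro m _
            rw [show n'+1-(m+1) = n'-m from by omega]
          have rhs1 : coeff (n'+1) (Rser t k)
              = ∑ m ∈ Finset.range (n'+1),
                  algebraMap Rq A (qChoose (T 1) (k+(m+1)-1) (m+1))
                    * (coeff (n'-m) (pk u (m+1)) * (t 0)^(m+1))
                + algebraMap Rq A (qChoose (T 1) (k+0-1) 0)
                    * (coeff (n'+1) (pk u 0) * (t 0)^0) := by
            unfold Rser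
            rw [coeff_mk, L5 k (n'+1), Finset.sum_range_succ']
            congr 1
            apply Finset.sum_congr rfl
            intro m _
            rw [show n'+1-(m+1) = n'-m from by omega]
          rw [lhs1, rhs1, mid2, qChoose_zero_right, qChoose_zero_right,
            add_sub_right_comm]
          congr 1
          rw [← Finset.sum_sub_distrib]
          apply Finset.sum_congr rfl
          intro m _
          have pas : qChoose (T 1 : Rq) (k+(m+1)) (m+1)
              = (T 1 : Rq)^k * qChoose (T 1) (k+m) m + qChoose (T 1) (k+(m+1)-1) (m+1) := by
            have := qChoose_pascal2 (T 1 : Rq) (k+m) m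
            rw [show (k+m)-m = k from by omega] at this
            rw [show k+(m+1)-1 = k+m from by omega, show k+(m+1) = (k+m)+1 from by omega]
            exact this
          rw [pas, map_add]
          noncomm_ring
      have hunit : IsUnit ((1 : PowerSeries A) - Y) := by
        rw [hY]
        exact isUnit_one_sub_mul_entryS _ _
      calc pk t (k+1) = pk t k * nestS (sc t k) := c0
        _ = Rser t k * Ring.inverse (1 - Y) := by rw [ihk, hdec, hY]
        _ = (Rser t (k+1) * (1 - Y)) * Ring.inverse (1 - Y) := by rw [hKI]
        _ = Rser t (k+1) * ((1 - Y) * Ring.inverse (1 - Y)) := by rw [mul_assoc]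
        _ = Rser t (k+1) := by rw [Ring.mul_inverse_cancel _ hunit, mul_one]

end mainthm

/-- in the (completed) q-commuting algebra on `t₁,…,t_N`, the nested
continued fraction equals `∑_α F_q(α) t_N^{α_N} ⋯ t_1^{α_1}`; formulated here in
`A[[X]]` (each `t_i` weighted by the central formal variable `X`, the coefficient of
`X^n` collecting the terms with `|α| = n`). -/
theorem statement2 {A : Type*} [Ring A] [Algebra Rq A] (N : ℕ) (t : Fin N → A)
    (hadj : ∀ (i : ℕ) (hi : i < N) (hi1 : i + 1 < N),
      t ⟨i, hi⟩ * t ⟨i + 1, hi1⟩ = (T 1 : Rq) • (t ⟨i + 1, hi1⟩ * t ⟨i, hi⟩))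
    (hfar : ∀ i j : Fin N, 2 ≤ |((i : ℕ) : ℤ) - ((j : ℕ) : ℤ)| → t i * t j = t j * t i) :
    nest (List.ofFn fun i : Fin N => PowerSeries.C (t i) * PowerSeries.X) =
      PowerSeries.mk (fun n => ∑ a ∈ Finset.Nat.antidiagonalTuple N n,
        algebraMap Rq A (Fq (T 1 : Rq) a) *
          (List.ofFn fun i : Fin N => t i.rev ^ a i.rev).prod) := by
  have hadj' : Hadj t := by
    intro i hi hi1
    rw [hadj i hi hi1, Algebra.smul_def]
  have hm := main_lemma t hadj' hfar 1
  have e1 : pk t 1 = nest (List.ofFn fun i : Fin N => PowerSeries.C (t i) * PowerSeries.X) := by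
    unfold pk
    rw [show List.range 1 = [0] from rfl]
    simp only [List.map_cons, List.map_nil, List.prod_cons, List.prod_nil, mul_one]
    apply congrArg nest
    apply congrArg List.ofFn
    funext i
    show entryS (sc t 0 i) = _
    simp [sc, entryS]
  have e2 : Rser t 1 = PowerSeries.mk (fun n => ∑ a ∈ Finset.Nat.antidiagonalTuple N n,
      algebraMap Rq A (Fq (T 1 : Rq) a) *
        (List.ofFn fun i : Fin N => t i.rev ^ a i.rev).prod) := by
    unfold Rser
    apply congrArg PowerSeries.mk
    funext n
    apply Finset.sum_congr rfl
    intro a _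
    have hG : Gq (T 1 : Rq) 1 a = Fq (T 1 : Rq) a := by
      unfold Gq
      rw [show 1 + aext a 0 - 1 = aext a 0 from by omega, qChoose_self, one_mul]
    rw [hG]
    rfl
  rw [← e1, hm, e2]
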